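/- Let N ≥ 2, let J be the 2×2 matrix with rows (0, −1) and (1, 0), and let U = {(X_1,…,X_N) ∈ (ℝ²)^N : X_1 ≠ X_2}. Let F_1, …, F_N : U → ℝ² be differentiable maps such that for each i: (a) F_i(X_1 + b, …, X_N + b) = F_i(X_1,…,X_N) for every b ∈ ℝ² and every X with both points in U, and (b) DF_i(X)(J·X_1, …, J·X_N) = J·F_i(X) for every X ∈ U. Then there exist differentiable functions λ_i, μ_i : U → ℝ (i = 1,…,N) such that F_i(X) = λ_i(X)·(X_2 − X_1) + μ_i(X)·J(X_2 − X_1) for every X ∈ U, and each λ_i and μ_i is invariant under simultaneous translations (λ_i(X_1+b,…,X_N+b) = λ_i(X) for all b) and has zero derivative at every X in the direction (J·X_1, …, J·X_N). -/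

import Mathlib

/-- Let `N = M + 2 ≥ 2` agents on the plane, `J = [[0,−1],[1,0]]`,
and `U = {X : X_1 ≠ X_2}`. If each `F_i` is differentiable on `U`, invariant under
simultaneous translations and jointly equivariant for the rotation generator `J`,
then `F_i(X) = λ_i(X)•(X_2 − X_1) + μ_i(X)•J(X_2 − X_1)` with differentiable
coefficients `λ_i, μ_i` that are translation invariant and jointly radial for `J`. -/
theorem stmt_10 (M : ℕ)
    (J : Matrix (Fin 2) (Fin 2) ℝ) (hJ : J = Matrix.of ![![0, -1], ![1, 0]])
    (U : Set (Fin (M + 2) → Fin 2 → ℝ))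
    (hU : U = {X | X 0 ≠ X 1})
    (F : Fin (M + 2) → (Fin (M + 2) → Fin 2 → ℝ) → (Fin 2 → ℝ))
    (hF_diff : ∀ i, ∀ X ∈ U, DifferentiableAt ℝ (F i) X)
    (hF_trans : ∀ i, ∀ X ∈ U, ∀ b : Fin 2 → ℝ, F i (fun j => X j + b) = F i X)
    (hF_rot : ∀ i, ∀ X ∈ U,
      fderiv ℝ (F i) X (fun j => J.mulVec (X j)) = J.mulVec (F i X)) :
    ∃ lam mu : Fin (M + 2) → (Fin (M + 2) → Fin 2 → ℝ) → ℝ,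
      (∀ i, ∀ X ∈ U, DifferentiableAt ℝ (lam i) X ∧ DifferentiableAt ℝ (mu i) X) ∧
      (∀ i, ∀ X ∈ U,
        F i X = lam i X • (X 1 - X 0) + mu i X • J.mulVec (X 1 - X 0)) ∧
      (∀ i, ∀ X ∈ U, ∀ b : Fin 2 → ℝ,
        lam i (fun j => X j + b) = lam i X ∧ mu i (fun j => X j + b) = mu i X) ∧
      (∀ i, ∀ X ∈ U,
        fderiv ℝ (lam i) X (fun j => J.mulVec (X j)) = 0 ∧
        fderiv ℝ (mu i) X (fun j => J.mulVec (X j)) = 0) := by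
  have hJv0 : ∀ u : Fin 2 → ℝ, J.mulVec u 0 = -u 1 := by
    intro u; rw [hJ]; simp [Matrix.mulVec, dotProduct, Fin.sum_univ_two, Matrix.vecHead, Matrix.vecTail]
  have hJv1 : ∀ u : Fin 2 → ℝ, J.mulVec u 1 = u 0 := by
    intro u; rw [hJ]; simp [Matrix.mulVec, dotProduct, Fin.sum_univ_two, Matrix.vecHead, Matrix.vecTail]
  -- denominator
  set den : (Fin (M + 2) → Fin 2 → ℝ) → ℝ :=
    fun X => (X 1 0 - X 0 0) * (X 1 0 - X 0 0) + (X 1 1 - X 0 1) * (X 1 1 - X 0 1)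
    with hden_def
  have hden_ne : ∀ X ∈ U, den X ≠ 0 := by
    intro X hX h
    have hne : X 0 ≠ X 1 := by rw [hU] at hX; exact hX
    apply hne
    have h' : (X 1 0 - X 0 0) * (X 1 0 - X 0 0) + (X 1 1 - X 0 1) * (X 1 1 - X 0 1) = 0 := h
    have h0 : X 1 0 - X 0 0 = 0 := by
      nlinarith [mul_self_nonneg (X 1 0 - X 0 0), mul_self_nonneg (X 1 1 - X 0 1)]
    have h1 : X 1 1 - X 0 1 = 0 := by
      nlinarith [mul_self_nonneg (X 1 0 - X 0 0), mul_self_nonneg (X 1 1 - X 0 1)]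
    funext k
    fin_cases k
    · show X 0 0 = X 1 0; linarith
    · show X 0 1 = X 1 1; linarith
  refine ⟨fun i X => (F i X 0 * (X 1 0 - X 0 0) + F i X 1 * (X 1 1 - X 0 1)) * (den X)⁻¹,
    fun i X => (F i X 1 * (X 1 0 - X 0 0) - F i X 0 * (X 1 1 - X 0 1)) * (den X)⁻¹,
    ?_, ?_, ?_, ?_⟩
  · -- differentiability
    intro i X hX
    have hF := hF_diff i X hX
    have h0 : DifferentiableAt ℝ (fun Y => F i Y 0) X := differentiableAt_pi.mp hF 0
    have h1 : DifferentiableAt ℝ (fun Y => F i Y 1) X := differentiableAt_pi.mp hF 1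
    have hc : ∀ (j : Fin (M + 2)) (k : Fin 2),
        DifferentiableAt ℝ (fun Y : Fin (M + 2) → Fin 2 → ℝ => Y j k) X := by
      intro j k
      have hj : DifferentiableAt ℝ (fun Y : Fin (M + 2) → Fin 2 → ℝ => Y j) X :=
        differentiableAt_pi.mp differentiableAt_id j
      exact differentiableAt_pi.mp hj k
    have hv0 : DifferentiableAt ℝ (fun Y : Fin (M + 2) → Fin 2 → ℝ => Y 1 0 - Y 0 0) X :=
      (hc 1 0).sub (hc 0 0)
    have hv1 : DifferentiableAt ℝ (fun Y : Fin (M + 2) → Fin 2 → ℝ => Y 1 1 - Y 0 1) X :=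
      (hc 1 1).sub (hc 0 1)
    have hdend : DifferentiableAt ℝ den X := (hv0.mul hv0).add (hv1.mul hv1)
    have hinv : DifferentiableAt ℝ (fun Y => (den Y)⁻¹) X := hdend.inv (hden_ne X hX)
    exact ⟨((h0.mul hv0).add (h1.mul hv1)).mul hinv,
      ((h1.mul hv0).sub (h0.mul hv1)).mul hinv⟩
  · -- decomposition
    intro i X hX
    have hd : (X 1 0 - X 0 0) * (X 1 0 - X 0 0) + (X 1 1 - X 0 1) * (X 1 1 - X 0 1) ≠ 0 :=
      hden_ne X hX
    funext k
    fin_cases k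
    · simp only [Fin.zero_eta, Fin.mk_one, Fin.isValue, Pi.add_apply, Pi.smul_apply,
        Pi.sub_apply, smul_eq_mul, hJv0, hJv1]
      rw [show den X = (X 1 0 - X 0 0) * (X 1 0 - X 0 0) + (X 1 1 - X 0 1) * (X 1 1 - X 0 1) from rfl]
      linear_combination (-F i X 0) * mul_inv_cancel₀ hd
    · simp only [Fin.zero_eta, Fin.mk_one, Fin.isValue, Pi.add_apply, Pi.smul_apply,
        Pi.sub_apply, smul_eq_mul, hJv0, hJv1]
      rw [show den X = (X 1 0 - X 0 0) * (X 1 0 - X 0 0) + (X 1 1 - X 0 1) * (X 1 1 - X 0 1) from rfl]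
      linear_combination (-F i X 1) * mul_inv_cancel₀ hd
  · -- translation invariance
    intro i X hX b
    have hXb := hF_trans i X hX b
    have hdenb : den (fun j => X j + b) = den X := by
      rw [hden_def]; simp only [Pi.add_apply]; ring
    constructor <;> simp only [hXb, hdenb, Pi.add_apply] <;> ring
  · -- radial derivative vanishes
    intro i X hX
    have hD : HasFDerivAt (F i) (fderiv ℝ (F i) X) X := (hF_diff i X hX).hasFDerivAt
    have hDw : fderiv ℝ (F i) X (fun j => J.mulVec (X j)) = J.mulVec (F i X) := hF_rot i X hX
    let P : Fin 2 → ((Fin 2 → ℝ) →L[ℝ] ℝ) := fun k => ContinuousLinearMap.proj k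
    let Q : Fin (M + 2) → ((Fin (M + 2) → Fin 2 → ℝ) →L[ℝ] (Fin 2 → ℝ)) :=
      fun j => ContinuousLinearMap.proj j
    have hf : ∀ k : Fin 2, HasFDerivAt (fun Y => F i Y k)
        ((P k).comp (fderiv ℝ (F i) X)) X := fun k => HasFDerivAt.comp X (P k).hasFDerivAt hD
    have hg : ∀ (j : Fin (M + 2)) (k : Fin 2),
        HasFDerivAt (fun Y : Fin (M + 2) → Fin 2 → ℝ => Y j k) ((P k).comp (Q j)) X :=
      fun j k => ((P k).comp (Q j)).hasFDerivAt
    have hv : ∀ k : Fin 2, HasFDerivAt (fun Y : Fin (M + 2) → Fin 2 → ℝ => Y 1 k - Y 0 k)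
        ((P k).comp (Q 1) - (P k).comp (Q 0)) X := fun k => (hg 1 k).sub (hg 0 k)
    set w : Fin (M + 2) → Fin 2 → ℝ := fun j => J.mulVec (X j) with hw
    -- evaluations of the component derivatives at w
    have hPD : ∀ (k : Fin 2) (u : Fin (M + 2) → Fin 2 → ℝ),
        ((P k).comp (fderiv ℝ (F i) X)) u = fderiv ℝ (F i) X u k := fun _ _ => rfl
    have hPQ : ∀ (j : Fin (M + 2)) (k : Fin 2) (u : Fin (M + 2) → Fin 2 → ℝ),
        ((P k).comp (Q j)) u = u j k := fun _ _ _ => rfl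
    have eD0 : ((P 0).comp (fderiv ℝ (F i) X)) w = -(F i X 1) := by
      rw [hPD, hDw, hJv0]
    have eD1 : ((P 1).comp (fderiv ℝ (F i) X)) w = F i X 0 := by
      rw [hPD, hDw, hJv1]
    have eG0 : ((P 0).comp (Q 1) - (P 0).comp (Q 0)) w = -(X 1 1 - X 0 1) := by
      rw [ContinuousLinearMap.sub_apply, hPQ, hPQ]
      simp only [hw, hJv0]
      ring
    have eG1 : ((P 1).comp (Q 1) - (P 1).comp (Q 0)) w = X 1 0 - X 0 0 := by
      rw [ContinuousLinearMap.sub_apply, hPQ, hPQ]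
      simp only [hw, hJv1]
    -- derivative of the denominator and its inverse
    have hdend : HasFDerivAt den
        (((X 1 0 - X 0 0) • ((P 0).comp (Q 1) - (P 0).comp (Q 0)) +
          (X 1 0 - X 0 0) • ((P 0).comp (Q 1) - (P 0).comp (Q 0))) +
         ((X 1 1 - X 0 1) • ((P 1).comp (Q 1) - (P 1).comp (Q 0)) +
          (X 1 1 - X 0 1) • ((P 1).comp (Q 1) - (P 1).comp (Q 0)))) X :=
      ((hv 0).mul (hv 0)).add ((hv 1).mul (hv 1))
    have hinv : HasFDerivAt (fun Y => (den Y)⁻¹) _ X :=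
      (hasDerivAt_inv (hden_ne X hX)).comp_hasFDerivAt X hdend
    constructor
    · have hnum : HasFDerivAt
          (fun Y => F i Y 0 * (Y 1 0 - Y 0 0) + F i Y 1 * (Y 1 1 - Y 0 1))
          ((F i X 0 • ((P 0).comp (Q 1) - (P 0).comp (Q 0)) +
            (X 1 0 - X 0 0) • ((P 0).comp (fderiv ℝ (F i) X))) +
           (F i X 1 • ((P 1).comp (Q 1) - (P 1).comp (Q 0)) +
            (X 1 1 - X 0 1) • ((P 1).comp (fderiv ℝ (F i) X)))) X :=
        ((hf 0).mul (hv 0)).add ((hf 1).mul (hv 1))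
      have hlam : HasFDerivAt
          (fun Y => (F i Y 0 * (Y 1 0 - Y 0 0) + F i Y 1 * (Y 1 1 - Y 0 1)) * (den Y)⁻¹)
          _ X := hnum.mul hinv
      rw [hlam.fderiv]
      simp only [ContinuousLinearMap.add_apply, ContinuousLinearMap.smul_apply,
        smul_eq_mul, eD0, eD1, eG0, eG1]
      ring
    · have hnum : HasFDerivAt
          (fun Y => F i Y 1 * (Y 1 0 - Y 0 0) - F i Y 0 * (Y 1 1 - Y 0 1))
          ((F i X 1 • ((P 0).comp (Q 1) - (P 0).comp (Q 0)) +
            (X 1 0 - X 0 0) • ((P 1).comp (fderiv ℝ (F i) X))) -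
           (F i X 0 • ((P 1).comp (Q 1) - (P 1).comp (Q 0)) +
            (X 1 1 - X 0 1) • ((P 0).comp (fderiv ℝ (F i) X)))) X :=
        ((hf 1).mul (hv 0)).sub ((hf 0).mul (hv 1))
      have hmu : HasFDerivAt
          (fun Y => (F i Y 1 * (Y 1 0 - Y 0 0) - F i Y 0 * (Y 1 1 - Y 0 1)) * (den Y)⁻¹)
          _ X := hnum.mul hinv
      rw [hmu.fderiv]
      simp only [ContinuousLinearMap.add_apply, ContinuousLinearMap.smul_apply,
        ContinuousLinearMap.sub_apply, smul_eq_mul, eD0, eD1, eG0, eG1]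
      ring
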